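/- Let p̄ ∈ Δ(n), β ∈ (0,1), α > 0, and let P be a Δ(n)-valued random vector with P(‖P − p̄‖_∞ ≤ α) ≥ 1 − β. Then E[P] belongs to the set 𝒫̂ = {βp₁ + (1−β)p₂ : p₁, p₂ ∈ Δ(n), ‖p₂ − p̄‖_∞ ≤ α}. -/

import Mathlib

open MeasureTheory

theorem expectation_mem_uncertainty_set
    {Ω : Type*} [MeasurableSpace Ω] (μ : Measure Ω) [IsProbabilityMeasure μ]
    (n : ℕ) (P : Ω → Fin n → ℝ) (hPmeas : Measurable P)
    (hPval : ∀ ω, P ω ∈ stdSimplex ℝ (Fin n))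
    (hPint : ∀ i, Integrable (fun ω => P ω i) μ)
    (pbar : Fin n → ℝ) (hpbar : pbar ∈ stdSimplex ℝ (Fin n))
    (β α : ℝ) (hβ : β ∈ Set.Ioo (0 : ℝ) 1) (hα : 0 < α)
    (hconc : (1 : ℝ) - β ≤ (μ {ω | ∀ i, |P ω i - pbar i| ≤ α}).toReal) :
    (fun i => ∫ ω, P ω i ∂μ) ∈
      {x : Fin n → ℝ | ∃ p₁ ∈ stdSimplex ℝ (Fin n), ∃ p₂ ∈ stdSimplex ℝ (Fin n),
        (∀ i, |p₂ i - pbar i| ≤ α) ∧ x = β • p₁ + (1 - β) • p₂} := by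
  classical
  obtain ⟨hβ0, hβ1⟩ := hβ
  set A : Set Ω := {ω | ∀ i, |P ω i - pbar i| ≤ α} with hA_def
  have hPi : ∀ i, Measurable fun ω => P ω i := fun i => (measurable_pi_apply i).comp hPmeas
  have hA : MeasurableSet A := by
    have h : A = ⋂ i, {ω | |P ω i - pbar i| ≤ α} := by
      ext ω; simp [hA_def]
    rw [h]
    exact MeasurableSet.iInter fun i =>
      measurableSet_le ((hPi i).sub measurable_const).abs measurable_const
  set γ := (μ A).toReal with hγ_def
  have hγ1 : γ ≤ 1 := by
    rw [hγ_def, ← ENNReal.toReal_one]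
    exact ENNReal.toReal_mono ENNReal.one_ne_top prob_le_one
  have hγβ : 1 - β ≤ γ := hconc
  have hγpos : 0 < γ := lt_of_lt_of_le (by linarith) hγβ
  have hInt : ∀ i, IntegrableOn (fun ω => P ω i) A μ := fun i => (hPint i).integrableOn
  have hIntc : ∀ i, IntegrableOn (fun ω => P ω i) Aᶜ μ := fun i => (hPint i).integrableOn
  -- total mass on A
  have hsumA : ∑ i, ∫ ω in A, P ω i ∂μ = γ := by
    rw [← integral_finset_sum _ fun i _ => hInt i]
    calc ∫ ω in A, ∑ i, P ω i ∂μ = ∫ ω in A, (1 : ℝ) ∂μ :=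
          integral_congr_ae (Filter.Eventually.of_forall fun ω => (hPval ω).2)
      _ = γ := by simp [hγ_def, Measure.real]
  -- total mass on Aᶜ
  have hμAc : (μ Aᶜ).toReal = 1 - γ := by
    rw [prob_compl_eq_one_sub hA, ENNReal.toReal_sub_of_le (prob_le_one) (by simp)]
    simp [hγ_def]
  have hsumAc : ∑ i, ∫ ω in Aᶜ, P ω i ∂μ = 1 - γ := by
    rw [← integral_finset_sum _ fun i _ => hIntc i]
    calc ∫ ω in Aᶜ, ∑ i, P ω i ∂μ = ∫ ω in Aᶜ, (1 : ℝ) ∂μ :=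
          integral_congr_ae (Filter.Eventually.of_forall fun ω => (hPval ω).2)
      _ = 1 - γ := by simp [hμAc, Measure.real]
  -- bounds
  have hnnA : ∀ i, 0 ≤ ∫ ω in A, P ω i ∂μ := fun i =>
    setIntegral_nonneg hA fun ω _ => (hPval ω).1 i
  have hnnAc : ∀ i, 0 ≤ ∫ ω in Aᶜ, P ω i ∂μ := fun i =>
    setIntegral_nonneg hA.compl fun ω _ => (hPval ω).1 i
  have hub : ∀ i, ∫ ω in A, P ω i ∂μ ≤ γ * (pbar i + α) := by
    intro i
    have h : ∫ ω in A, P ω i ∂μ ≤ ∫ _ω in A, (pbar i + α) ∂μ :=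
      setIntegral_mono_on (hInt i)
        (integrableOn_const (measure_ne_top μ A)) hA
        (fun ω hω => by
          have h2 := abs_le.1 (hω i : |P ω i - pbar i| ≤ α)
          linarith [h2.2])
    simpa [hγ_def, mul_comm, Measure.real] using h
  have hlb : ∀ i, γ * (pbar i - α) ≤ ∫ ω in A, P ω i ∂μ := by
    intro i
    have h : ∫ _ω in A, (pbar i - α) ∂μ ≤ ∫ ω in A, P ω i ∂μ :=
      setIntegral_mono_on
        (integrableOn_const (measure_ne_top μ A)) (hInt i) hA
        (fun ω hω => by
          have h2 := abs_le.1 (hω i : |P ω i - pbar i| ≤ α)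
          linarith [h2.1])
    simpa [hγ_def, mul_comm, Measure.real] using h
  -- define the two points
  set p₂ : Fin n → ℝ := fun i => (∫ ω in A, P ω i ∂μ) / γ with hp₂_def
  set p₁ : Fin n → ℝ := fun i =>
    ((γ - 1 + β) * p₂ i + ∫ ω in Aᶜ, P ω i ∂μ) / β with hp₁_def
  have hp₂mem : p₂ ∈ stdSimplex ℝ (Fin n) := by
    constructor
    · intro i; exact div_nonneg (hnnA i) hγpos.le
    · rw [show (∑ i, p₂ i) = (∑ i, ∫ ω in A, P ω i ∂μ) / γ by
        simp [hp₂_def, Finset.sum_div]]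
      rw [hsumA, div_self hγpos.ne']
  have hp₁mem : p₁ ∈ stdSimplex ℝ (Fin n) := by
    constructor
    · intro i
      apply div_nonneg _ hβ0.le
      have : 0 ≤ (γ - 1 + β) * p₂ i :=
        mul_nonneg (by linarith) (hp₂mem.1 i)
      linarith [hnnAc i]
    · have h : (∑ i, p₁ i)
          = ((γ - 1 + β) * (∑ i, p₂ i) + ∑ i, ∫ ω in Aᶜ, P ω i ∂μ) / β := by
        rw [show (∑ i, p₁ i)
            = (∑ i, ((γ - 1 + β) * p₂ i + ∫ ω in Aᶜ, P ω i ∂μ)) / β by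
          rw [Finset.sum_div]]
        rw [Finset.sum_add_distrib, Finset.mul_sum]
      rw [h, hp₂mem.2, hsumAc]
      field_simp
      ring
  have hclose : ∀ i, |p₂ i - pbar i| ≤ α := by
    intro i
    rw [abs_le]
    constructor
    · have h1 : pbar i - α ≤ p₂ i := by
        rw [hp₂_def]
        rw [le_div_iff₀ hγpos]
        calc (pbar i - α) * γ = γ * (pbar i - α) := by ring
          _ ≤ _ := hlb i
      linarith
    · have h2 : p₂ i ≤ pbar i + α := by
        rw [hp₂_def]
        rw [div_le_iff₀ hγpos]
        calc ∫ ω in A, P ω i ∂μ ≤ γ * (pbar i + α) := hub i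
          _ = (pbar i + α) * γ := by ring
      linarith
  refine ⟨p₁, hp₁mem, p₂, hp₂mem, hclose, ?_⟩
  funext i
  have hsplit : (∫ ω in A, P ω i ∂μ) + ∫ ω in Aᶜ, P ω i ∂μ = ∫ ω, P ω i ∂μ :=
    integral_add_compl hA (hPint i)
  have hγp₂ : γ * p₂ i = ∫ ω in A, P ω i ∂μ := by
    rw [hp₂_def]; field_simp
  have hβp₁ : β * p₁ i = (γ - 1 + β) * p₂ i + ∫ ω in Aᶜ, P ω i ∂μ := by
    rw [hp₁_def]; field_simp
  show ∫ ω, P ω i ∂μ = β * p₁ i + (1 - β) * p₂ i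
  rw [hβp₁, ← hsplit, ← hγp₂]
  ring
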